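/- arXiv:1711.10646 — 4 statements merged into one kernel-verified Lean document; each statement's English description precedes it below -/
import Mathlib

section
/- For all integers p ≥ 1 and K, K′ with p ≤ K < K′, one has a₀(K′,p)² < a₀(K,p)²; i.e., since a₀(K,p) is negative and strictly increasing in K, its square strictly decreases in K. -/
/-- The `m`-th harmonic number `H_m = ∑_{i=1}^m 1/i` (with `H_0 = 0`), as a real number. -/
noncomputable def harmonicR (m : ℕ) : ℝ := ∑ i ∈ Finset.range m, (1 : ℝ) / (i + 1)

/-- The digamma function at a positive integer `n`: `ψ(n) = H_{n-1} - γ`. -/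
noncomputable def digammaNat (n : ℕ) : ℝ := harmonicR (n - 1) - Real.eulerMascheroniConstant

/-- `a₀(K, p) = (1/p) ∑_{j=1}^p ψ(K+1-j) - log K`. -/
noncomputable def a0 (K p : ℕ) : ℝ :=
  (1 / (p : ℝ)) * ∑ j ∈ Finset.Icc 1 p, digammaNat (K + 1 - j) - Real.log K

lemma harmonicR_eq (n : ℕ) : harmonicR n = (harmonic n : ℝ) := by
  rw [harmonicR, harmonic]
  push_cast
  simp [one_div]

lemma harmonicR_succ (m : ℕ) : harmonicR (m + 1) = harmonicR m + 1 / (m + 1 : ℝ) := by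
  rw [harmonicR, harmonicR, Finset.sum_range_succ]

lemma harmonicR_sub_lt (n : ℕ) :
    harmonicR n - Real.eulerMascheroniConstant < Real.log (n + 1) := by
  have h := Real.eulerMascheroniSeq_lt_eulerMascheroniConstant n
  rw [Real.eulerMascheroniSeq] at h
  rw [harmonicR_eq]
  linarith

lemma a0_neg (p K : ℕ) (hp : 1 ≤ p) (hK : p ≤ K) : a0 K p < 0 := by
  have hp0 : (0 : ℝ) < p := by exact_mod_cast hp
  have hK0 : (0 : ℝ) < K := by exact_mod_cast (hp.trans hK)
  have hsum : ∑ j ∈ Finset.Icc 1 p, digammaNat (K + 1 - j)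
      < ∑ j ∈ Finset.Icc 1 p, Real.log K := by
    apply Finset.sum_lt_sum_of_nonempty
    · exact ⟨1, Finset.mem_Icc.mpr ⟨le_refl 1, hp⟩⟩
    · intro j hj
      obtain ⟨hj1, hjp⟩ := Finset.mem_Icc.mp hj
      have hjK : j ≤ K := hjp.trans hK
      have h1 : K + 1 - j - 1 = K - j := by omega
      rw [digammaNat, h1]
      refine lt_of_lt_of_le (harmonicR_sub_lt (K - j)) ?_
      have h2 : ((K - j : ℕ) : ℝ) + 1 ≤ (K : ℝ) := by
        have : (K - j) + 1 ≤ K := by omega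
        exact_mod_cast this
      exact Real.log_le_log (by positivity) h2
  rw [Finset.sum_const, Nat.card_Icc] at hsum
  have hcard : (p + 1 - 1) = p := by omega
  rw [hcard] at hsum
  rw [a0, sub_neg]
  calc (1 / (p : ℝ)) * ∑ j ∈ Finset.Icc 1 p, digammaNat (K + 1 - j)
      < (1 / (p : ℝ)) * (p * Real.log K) := by
        apply mul_lt_mul_of_pos_left _ (by positivity)
        simpa [nsmul_eq_mul] using hsum
    _ = Real.log K := by field_simp

lemma a0_step (p K : ℕ) (hp : 1 ≤ p) (hK : p ≤ K) : a0 K p < a0 (K + 1) p := by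
  have hp0 : (0 : ℝ) < p := by exact_mod_cast hp
  have hK0 : (0 : ℝ) < K := by exact_mod_cast (hp.trans hK)
  have hsum : ∑ j ∈ Finset.Icc 1 p, (digammaNat (K + 1 - j) + 1 / (K : ℝ))
      ≤ ∑ j ∈ Finset.Icc 1 p, digammaNat (K + 1 + 1 - j) := by
    apply Finset.sum_le_sum
    intro j hj
    obtain ⟨hj1, hjp⟩ := Finset.mem_Icc.mp hj
    have hjK : j ≤ K := hjp.trans hK
    have h1 : K + 1 - j - 1 = K - j := by omega
    have h2 : K + 1 + 1 - j - 1 = (K - j) + 1 := by omega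
    rw [digammaNat, digammaNat, h1, h2, harmonicR_succ]
    have h3 : ((K - j : ℕ) : ℝ) + 1 ≤ (K : ℝ) := by
      have : (K - j) + 1 ≤ K := by omega
      exact_mod_cast this
    have h4 : 1 / (K : ℝ) ≤ 1 / (((K - j : ℕ) : ℝ) + 1) :=
      one_div_le_one_div_of_le (by positivity) h3
    linarith
  rw [Finset.sum_add_distrib, Finset.sum_const, Nat.card_Icc] at hsum
  have hcard : (p + 1 - 1) = p := by omega
  rw [hcard, nsmul_eq_mul] at hsum
  have hlog : Real.log (K + 1 : ℕ) - Real.log K < 1 / (K : ℝ) := by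
    push_cast
    rw [← Real.log_div (by positivity) (by positivity)]
    have hx : ((K : ℝ) + 1) / K ≠ 1 := by
      intro h
      rw [div_eq_one_iff_eq (by positivity)] at h
      linarith
    have := Real.log_lt_sub_one_of_pos (show (0:ℝ) < ((K:ℝ)+1)/K by positivity) hx
    have heq : ((K : ℝ) + 1) / K - 1 = 1 / K := by field_simp; ring
    linarith [heq ▸ this]
  rw [a0, a0]
  have hmul : (1 / (p : ℝ)) * (∑ j ∈ Finset.Icc 1 p, digammaNat (K + 1 - j) + p * (1 / K))
      ≤ (1 / (p : ℝ)) * ∑ j ∈ Finset.Icc 1 p, digammaNat (K + 1 + 1 - j) :=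
    mul_le_mul_of_nonneg_left hsum (by positivity)
  have hrw : (1 / (p : ℝ)) * (∑ j ∈ Finset.Icc 1 p, digammaNat (K + 1 - j) + p * (1 / K))
      = (1 / (p : ℝ)) * ∑ j ∈ Finset.Icc 1 p, digammaNat (K + 1 - j) + 1 / K := by
    field_simp
  rw [hrw] at hmul
  linarith

lemma a0_lt (p K K' : ℕ) (hp : 1 ≤ p) (hK : p ≤ K) (hKK : K < K') : a0 K p < a0 K' p := by
  induction K' with
  | zero => omega
  | succ n ih =>
    rcases Nat.lt_or_ge K n with h | h
    · exact (ih h).trans (a0_step p n hp (by omega))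
    · have : K = n := by omega
      subst this
      exact a0_step p K hp hK

/-- For all integers `p ≥ 1` and `K, K'` with `p ≤ K < K'`, `a₀(K', p)² < a₀(K, p)²`. -/
theorem a0_sq_strictAnti (p K K' : ℕ) (hp : 1 ≤ p) (hK : p ≤ K) (hKK : K < K') :
    (a0 K' p) ^ 2 < (a0 K p) ^ 2 := by
  have h1 := a0_lt p K K' hp hK hKK
  have h2 := a0_neg p K' hp (by omega)
  nlinarith
end

section
/- For all integers p ≥ 1, K ≥ p and N ≥ 2, p·a₀(K,p)² > p·a₀(K·N,p)²; in other words, the intrinsic bias of the sample Fréchet mean of N i.i.d. complex Wishart covariance estimates (which equals p·a₀(K,p)²) strictly exceeds the intrinsic bias of their simple sample mean (which equals p·a₀(K·N,p)²). -/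
/-- Partial sum `∑_{i=0}^{d-1} 1/(a+i)`. -/
noncomputable def Sgap (a : ℝ) (d : ℕ) : ℝ := ∑ i ∈ Finset.range d, 1 / (a + i)

lemma Sgap_succ' (a : ℝ) (d : ℕ) : Sgap a (d + 1) = 1 / a + Sgap (a + 1) d := by
  unfold Sgap
  rw [Finset.sum_range_succ']
  simp only [Nat.cast_zero, add_zero, Nat.cast_add, Nat.cast_one]
  rw [add_comm]
  congr 1
  refine Finset.sum_congr rfl fun i _ => ?_
  ring_nf

lemma log_succ_le (a : ℝ) (ha : 0 < a) : Real.log (a + 1) - Real.log a ≤ 1 / a := by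
  have h1 : (0 : ℝ) < (a + 1) / a := by positivity
  have := Real.log_le_sub_one_of_pos h1
  rw [Real.log_div (by linarith) (ne_of_gt ha)] at this
  have : Real.log (a + 1) - Real.log a ≤ (a + 1) / a - 1 := this
  calc Real.log (a + 1) - Real.log a ≤ (a + 1) / a - 1 := this
    _ = 1 / a := by field_simp; ring

lemma log_succ_lt (a : ℝ) (ha : 0 < a) : Real.log (a + 1) - Real.log a < 1 / a := by
  have h1 : (0 : ℝ) < (a + 1) / a := by positivity
  have hne : (a + 1) / a ≠ 1 := by
    intro h
    field_simp at h
    linarith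
  have := Real.log_lt_sub_one_of_pos h1 hne
  rw [Real.log_div (by linarith) (ne_of_gt ha)] at this
  calc Real.log (a + 1) - Real.log a < (a + 1) / a - 1 := this
    _ = 1 / a := by field_simp; ring

lemma log_le_Sgap (d : ℕ) : ∀ a : ℝ, 0 < a → Real.log (a + d) - Real.log a ≤ Sgap a d := by
  induction d with
  | zero => intro a ha; simp [Sgap]
  | succ d ih =>
    intro a ha
    have h1 := log_succ_le a ha
    have h2 := ih (a + 1) (by linarith)
    rw [Sgap_succ']
    push_cast
    have : a + 1 + (d : ℝ) = a + ((d : ℝ) + 1) := by ring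
    rw [this] at h2
    linarith

lemma log_lt_Sgap (a : ℝ) (ha : 0 < a) (d : ℕ) (hd : 1 ≤ d) :
    Real.log (a + d) - Real.log a < Sgap a d := by
  obtain ⟨d', rfl⟩ := Nat.exists_eq_add_of_le hd
  have h1 := log_succ_lt a ha
  have h2 := log_le_Sgap d' (a + 1) (by linarith)
  rw [add_comm 1 d', Sgap_succ']
  push_cast
  have : a + 1 + (d' : ℝ) = a + ((d' : ℝ) + 1) := by ring
  rw [this] at h2
  linarith

lemma Sgap_anti {a b : ℝ} (ha : 0 < a) (hab : a ≤ b) (d : ℕ) : Sgap b d ≤ Sgap a d := by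
  refine Finset.sum_le_sum fun i _ => ?_
  have hi : (0 : ℝ) ≤ i := Nat.cast_nonneg i
  apply div_le_div_of_nonneg_left (by norm_num) (by linarith) (by linarith)

lemma harmonicR_add (m d : ℕ) : harmonicR (m + d) = harmonicR m + Sgap (m + 1) d := by
  unfold harmonicR Sgap
  rw [Finset.sum_range_add]
  congr 1
  refine Finset.sum_congr rfl fun i _ => ?_
  push_cast
  ring_nf

lemma harmonicR_mono : Monotone harmonicR := by
  intro m n hmn
  obtain ⟨d, rfl⟩ := Nat.exists_eq_add_of_le hmn
  rw [harmonicR_add]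
  have : 0 ≤ Sgap (m + 1) d := Finset.sum_nonneg fun i _ => by positivity
  linarith

lemma digammaNat_mono : Monotone digammaNat := by
  intro m n hmn
  unfold digammaNat
  have := harmonicR_mono (Nat.sub_le_sub_right hmn 1)
  linarith

lemma harmonicR_eq_harmonic (m : ℕ) : harmonicR m = (harmonic m : ℝ) := by
  unfold harmonicR harmonic
  push_cast
  refine Finset.sum_congr rfl fun i _ => ?_
  rw [one_div]

lemma digammaNat_lt_log (n : ℕ) (hn : 1 ≤ n) : digammaNat n < Real.log n := by
  have h := Real.eulerMascheroniSeq_lt_eulerMascheroniConstant (n - 1)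
  unfold Real.eulerMascheroniSeq at h
  have hcast : ((n - 1 : ℕ) : ℝ) + 1 = (n : ℝ) := by
    have : n - 1 + 1 = n := Nat.succ_pred_eq_of_pos hn
    exact_mod_cast congrArg (Nat.cast : ℕ → ℝ) this
  rw [hcast, ← harmonicR_eq_harmonic] at h
  unfold digammaNat
  linarith

/-- For all integers `p ≥ 1`, `K ≥ p` and `N ≥ 2`, the intrinsic bias `p·a₀(K,p)²` of the
sample Fréchet mean strictly exceeds the intrinsic bias `p·a₀(K·N,p)²` of the sample mean. -/
theorem ibias_frechet_gt_ibias_mean (p K N : ℕ) (hp : 1 ≤ p) (hK : p ≤ K) (hN : 2 ≤ N) :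
    (p : ℝ) * (a0 K p) ^ 2 > (p : ℝ) * (a0 (K * N) p) ^ 2 := by
  set K' := K * N with hK'
  have hK1 : 1 ≤ K := le_trans hp hK
  have hKK' : K < K' := by
    have h2 : K * 2 ≤ K * N := Nat.mul_le_mul_left K hN
    have h3 : K < K * 2 := by omega
    exact lt_of_lt_of_le h3 h2
  have hK'1 : 1 ≤ K' := le_trans hK1 (le_of_lt hKK')
  have hpne : (p : ℝ) ≠ 0 := Nat.cast_ne_zero.mpr (by omega)
  have hppos : (0 : ℝ) < p := by exact_mod_cast hp
  have hIcc : (Finset.Icc 1 p).Nonempty := ⟨1, Finset.mem_Icc.mpr ⟨le_refl 1, hp⟩⟩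
  have hcard : (Finset.Icc 1 p).card = p := by rw [Nat.card_Icc]; omega
  -- Step 1: a0 K' p < 0
  have hy_neg : a0 K' p < 0 := by
    have hterm : ∀ j ∈ Finset.Icc 1 p, digammaNat (K' + 1 - j) < Real.log K' := by
      intro j hj
      have hj1 := (Finset.mem_Icc.mp hj).1
      have : digammaNat (K' + 1 - j) ≤ digammaNat K' := digammaNat_mono (by omega)
      calc digammaNat (K' + 1 - j) ≤ digammaNat K' := this
        _ < Real.log K' := digammaNat_lt_log K' hK'1
    have hsum : ∑ j ∈ Finset.Icc 1 p, digammaNat (K' + 1 - j)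
        < ∑ j ∈ Finset.Icc 1 p, Real.log K' :=
      Finset.sum_lt_sum_of_nonempty hIcc hterm
    rw [Finset.sum_const, hcard, nsmul_eq_mul] at hsum
    unfold a0
    have : (1 / (p : ℝ)) * ∑ j ∈ Finset.Icc 1 p, digammaNat (K' + 1 - j)
        < (1 / (p : ℝ)) * ((p : ℝ) * Real.log K') := by
      apply mul_lt_mul_of_pos_left hsum (by positivity)
    rw [one_div, inv_mul_cancel_left₀ hpne] at this
    simp only [one_div]
    linarith
  -- Step 2: a0 K p < a0 K' p
  have hxy : a0 K p < a0 K' p := by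
    set d := K' - K with hd
    have hd1 : 1 ≤ d := by omega
    have hcastK' : ((K' : ℕ) : ℝ) = (K : ℝ) + (d : ℝ) := by
      have : K + d = K' := by omega
      exact_mod_cast (congrArg (Nat.cast : ℕ → ℝ) this).symm
    have hterm : ∀ j ∈ Finset.Icc 1 p,
        Real.log K' - Real.log K < digammaNat (K' + 1 - j) - digammaNat (K + 1 - j) := by
      intro j hj
      obtain ⟨hj1, hjp⟩ := Finset.mem_Icc.mp hj
      have hjK : j ≤ K := le_trans hjp hK
      have e1 : K' + 1 - j - 1 = (K - j) + d := by omega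
      have e2 : K + 1 - j - 1 = K - j := by omega
      have hdiff : digammaNat (K' + 1 - j) - digammaNat (K + 1 - j)
          = Sgap ((K - j : ℕ) + 1) d := by
        unfold digammaNat
        rw [e1, e2, harmonicR_add]
        ring
      have hanti : Sgap (K : ℝ) d ≤ Sgap ((K - j : ℕ) + 1) d := by
        apply Sgap_anti (by positivity)
        have : (K - j : ℕ) + 1 ≤ K := by omega
        exact_mod_cast this
      have hlog : Real.log ((K : ℝ) + d) - Real.log K < Sgap (K : ℝ) d :=
        log_lt_Sgap _ (by exact_mod_cast hK1) d hd1
      rw [hdiff, hcastK']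
      linarith
    have hsum : ∑ j ∈ Finset.Icc 1 p, (Real.log K' - Real.log K)
        < ∑ j ∈ Finset.Icc 1 p, (digammaNat (K' + 1 - j) - digammaNat (K + 1 - j)) :=
      Finset.sum_lt_sum_of_nonempty hIcc hterm
    rw [Finset.sum_const, hcard, nsmul_eq_mul, Finset.sum_sub_distrib] at hsum
    unfold a0
    have : (1 / (p : ℝ)) * ((p : ℝ) * (Real.log K' - Real.log K))
        < (1 / (p : ℝ)) * (∑ j ∈ Finset.Icc 1 p, digammaNat (K' + 1 - j)
          - ∑ j ∈ Finset.Icc 1 p, digammaNat (K + 1 - j)) := by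
      apply mul_lt_mul_of_pos_left hsum (by positivity)
    rw [one_div, inv_mul_cancel_left₀ hpne, mul_sub] at this
    simp only [one_div]
    linarith
  -- Step 3: conclude
  have hx_neg : a0 K p < 0 := lt_trans hxy hy_neg
  have hsq : (a0 K' p) ^ 2 < (a0 K p) ^ 2 := by
    have h1 : -(-(a0 K p)) < a0 K' p := by rw [neg_neg]; exact hxy
    have h2 : a0 K' p < -(a0 K p) := by linarith
    calc (a0 K' p) ^ 2 < (-(a0 K p)) ^ 2 := sq_lt_sq' h1 h2
      _ = (a0 K p) ^ 2 := by ring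
  exact mul_lt_mul_of_pos_left hsq hppos
end

section
/- Let K be a positive integer and let S be a real random variable with law Gamma(K,K). Then the variance of log S equals ψ′(K) = π²/6 − ∑_{j=1}^{K−1} 1/j²; that is, E[(log S)²] − (E[log S])² = π²/6 − ∑_{j=1}^{K−1} 1/j². -/
open MeasureTheory ProbabilityTheory

noncomputable section
namespace VLG
open Real Set Filter Topology Asymptotics
open scoped ENNReal NNReal


/-- complex integrand family -/
def fm (m : ℕ) : ℝ → ℂ := fun t => ((Real.log t) ^ m * Real.exp (-t) : ℝ)

/-- real Mellin-type integrals -/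
def R (m : ℕ) (x : ℝ) : ℝ := ∫ t in Ioi (0:ℝ), t ^ (x - 1) * (Real.log t ^ m * Real.exp (-t))

lemma mellin_fm (m : ℕ) (x : ℝ) : mellin (fm m) x = ((R m x : ℝ) : ℂ) :=
  calc mellin (fm m) x
      = ∫ t in Ioi (0:ℝ), ((t ^ (x - 1) * (Real.log t ^ m * Real.exp (-t)) : ℝ) : ℂ) := by
        refine setIntegral_congr_fun measurableSet_Ioi (fun t ht => ?_)
        rw [fm, smul_eq_mul, Complex.ofReal_mul,
          show ((x:ℂ) - 1) = ((x - 1 : ℝ) : ℂ) by push_cast; ring,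
          ← Complex.ofReal_cpow (le_of_lt ht)]
        push_cast
        ring
    _ = ((R m x : ℝ) : ℂ) := integral_ofReal

lemma locint (m : ℕ) : LocallyIntegrableOn (fm m) (Ioi 0) := by
  refine ContinuousOn.locallyIntegrableOn ?_ measurableSet_Ioi
  refine Continuous.comp_continuousOn Complex.continuous_ofReal ?_
  exact ((Real.continuousOn_log.mono (fun x hx => ne_of_gt hx)).pow m).mul
    (Real.continuous_exp.comp continuous_neg).continuousOn

lemma isBigO_top_real (m : ℕ) (a : ℝ) :
    (fun t : ℝ => Real.log t ^ m * Real.exp (-t)) =O[atTop] (· ^ (-a)) := by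
  have h1 : (fun t : ℝ => Real.log t ^ m) =O[atTop] (· ^ (m : ℝ)) := by
    refine ((isLittleO_log_rpow_atTop one_pos).isBigO.pow m).trans (IsBigO.of_bound 1 ?_)
    filter_upwards [eventually_ge_atTop (1:ℝ)] with t ht
    have ht0 : (0:ℝ) ≤ t := by linarith
    rw [one_mul, norm_pow, Real.norm_eq_abs, Real.norm_eq_abs,
      abs_of_nonneg (Real.rpow_nonneg ht0 _), abs_of_nonneg (Real.rpow_nonneg ht0 _),
      Real.rpow_one, ← Real.rpow_natCast t m]
  have h2 : (fun t : ℝ => Real.exp (-t)) =O[atTop] (· ^ (-a - m)) := by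
    simpa using (isLittleO_exp_neg_mul_rpow_atTop one_pos (-a - m)).isBigO
  refine (h1.mul h2).trans (IsBigO.of_bound 1 ?_)
  filter_upwards [eventually_gt_atTop (0:ℝ)] with t ht
  rw [one_mul, ← Real.rpow_add ht]
  norm_num

lemma isBigO_bot_real (m : ℕ) {b : ℝ} (hb : 0 < b) :
    (fun t : ℝ => Real.log t ^ m * Real.exp (-t)) =O[𝓝[>] (0:ℝ)] (· ^ (-b)) := by
  have hq : -(b / (m + 1)) < 0 := neg_lt_zero.mpr (by positivity)
  have h1 : (fun t : ℝ => Real.log t ^ m) =O[𝓝[>] (0:ℝ)]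
      (fun t => t ^ (-(b / (m+1)) * m)) := by
    refine ((isLittleO_log_rpow_nhdsGT_zero hq).isBigO.pow m).trans (IsBigO.of_bound 1 ?_)
    filter_upwards [self_mem_nhdsWithin] with t (ht : 0 < t)
    rw [one_mul, norm_pow, Real.norm_eq_abs, Real.norm_eq_abs,
      abs_of_nonneg (Real.rpow_nonneg ht.le _), abs_of_nonneg (Real.rpow_nonneg ht.le _),
      ← Real.rpow_natCast (t ^ (-(b/(m+1)))) m, ← Real.rpow_mul ht.le]
  have h2 : (fun t : ℝ => Real.exp (-t)) =O[𝓝[>] (0:ℝ)] (fun _ => (1:ℝ)) := by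
    refine IsBigO.of_bound 1 ?_
    filter_upwards [self_mem_nhdsWithin] with t (ht : 0 < t)
    simp [Real.abs_exp, Real.exp_le_one_iff.2 (by linarith : -t ≤ 0)]
  refine (h1.mul h2).trans (IsBigO.of_bound 1 ?_)
  filter_upwards [Ioo_mem_nhdsGT one_pos] with t ht
  rw [one_mul, mul_one, Real.norm_eq_abs, Real.norm_eq_abs,
    abs_of_nonneg (Real.rpow_nonneg ht.1.le _), abs_of_nonneg (Real.rpow_nonneg ht.1.le _)]
  refine Real.rpow_le_rpow_of_exponent_ge ht.1 ht.2.le ?_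
  rw [neg_mul, neg_le_neg_iff, div_mul_eq_mul_div]
  rw [div_le_iff₀ (by positivity)]
  have hm : (0:ℝ) ≤ m := Nat.cast_nonneg m
  nlinarith

lemma isBigO_top (m : ℕ) (a : ℝ) : (fm m) =O[atTop] (· ^ (-a)) :=
  (Complex.ofRealCLM.isBigO_comp _ _).trans (isBigO_top_real m a)

lemma isBigO_bot (m : ℕ) {b : ℝ} (hb : 0 < b) : (fm m) =O[𝓝[>] (0:ℝ)] (· ^ (-b)) :=
  (Complex.ofRealCLM.isBigO_comp _ _).trans (isBigO_bot_real m hb)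

lemma mellin_step (m : ℕ) {s : ℂ} (hs : 0 < s.re) :
    MellinConvergent (fm (m+1)) s ∧ HasDerivAt (mellin (fm m)) (mellin (fm (m+1)) s) s := by
  have key := mellin_hasDerivAt_of_isBigO_rpow (a := s.re + 1) (b := s.re / 2)
    (locint m) (isBigO_top m _) (by linarith) (isBigO_bot m (by linarith)) (by linarith)
  have heq : (fun t : ℝ => Real.log t • fm m t) = fm (m+1) := by
    funext t
    rw [fm, fm, Complex.real_smul]
    push_cast
    ring
  rw [heq] at key
  exact key



-- assume part1
lemma hasDerivAt_R (m : ℕ) {x : ℝ} (hx : 0 < x) : HasDerivAt (R m) (R (m+1) x) x := by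
  have hs : 0 < ((x:ℂ)).re := by simpa using hx
  have h2 := (mellin_step m hs).2.real_of_complex
  have e1 : (fun y : ℝ => (mellin (fm m) y).re) = R m := funext fun y => by
    rw [mellin_fm]; simp
  have e2 : (mellin (fm (m+1)) ((x:ℝ):ℂ)).re = R (m+1) x := by rw [mellin_fm]; simp
  rwa [e1, e2] at h2

lemma integrableOn_R (m : ℕ) {x : ℝ} (hx : 0 < x) :
    IntegrableOn (fun t : ℝ => t ^ (x-1) * (Real.log t ^ m * Real.exp (-t))) (Ioi 0) := by
  cases m with
  | zero =>
      have := Real.GammaIntegral_convergent hx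
      exact IntegrableOn.congr_fun this (fun t ht => by simp [mul_comm]) measurableSet_Ioi
  | succ m =>
      have hs : 0 < ((x:ℂ)).re := by simpa using hx
      have h := (mellin_step m hs).1
      have h2 := h.re
      refine IntegrableOn.congr_fun h2 (fun t ht => ?_) measurableSet_Ioi
      simp only [RCLike.re_to_complex]
      rw [smul_eq_mul, show fm (m+1) t = ((Real.log t ^ (m+1) * Real.exp (-t) : ℝ) : ℂ) from rfl,
        show ((x:ℂ) - 1) = ((x - 1 : ℝ) : ℂ) by push_cast; ring,
        ← Complex.ofReal_cpow (le_of_lt ht), ← Complex.ofReal_mul, Complex.ofReal_re]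

lemma R_zero {x : ℝ} (hx : 0 < x) : R 0 x = Real.Gamma x := by
  rw [Real.Gamma_eq_integral hx, R]
  exact setIntegral_congr_fun measurableSet_Ioi fun t ht => by simp [mul_comm]

lemma hasDerivAt_Gamma_R {x : ℝ} (hx : 0 < x) : HasDerivAt Real.Gamma (R 1 x) x := by
  refine (hasDerivAt_R 0 hx).congr_of_eventuallyEq ?_
  filter_upwards [Ioi_mem_nhds hx] with y hy
  exact (R_zero hy).symm

def ps (x : ℝ) : ℝ := R 1 x / Real.Gamma x

lemma hasDerivAt_logGamma {x : ℝ} (hx : 0 < x) :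
    HasDerivAt (fun y => Real.log (Real.Gamma y)) (ps x) x :=
  (hasDerivAt_Gamma_R hx).log (Real.Gamma_pos_of_pos hx).ne'

lemma ps_rec {x : ℝ} (hx : 0 < x) : ps (x + 1) = ps x + 1 / x := by
  have h2 : HasDerivAt (fun y => Real.log (Real.Gamma (y + 1))) (ps (x+1)) x := by
    simpa [Function.comp_def] using (hasDerivAt_logGamma (by linarith : (0:ℝ) < x + 1)).comp x
      ((hasDerivAt_id x).add_const 1)
  have h3 : HasDerivAt (fun y => Real.log (Real.Gamma y) + Real.log y) (ps x + 1/x) x := by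
    rw [one_div]
    exact (hasDerivAt_logGamma hx).add (Real.hasDerivAt_log hx.ne')
  have h4 : HasDerivAt (fun y => Real.log (Real.Gamma (y + 1))) (ps x + 1/x) x := by
    refine h3.congr_of_eventuallyEq ?_
    filter_upwards [eventually_gt_nhds hx] with y hy
    rw [Real.Gamma_add_one hy.ne', Real.log_mul hy.ne' (Real.Gamma_pos_of_pos hy).ne', add_comm]
  exact h2.unique h4

local notation "γ" => Real.eulerMascheroniConstant

lemma ps_one : ps 1 = -γ := by
  have hR : R 1 1 = -γ := (hasDerivAt_Gamma_R one_pos).unique Real.hasDerivAt_Gamma_one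
  simp [ps, hR, Real.Gamma_one]

lemma ps_mono : MonotoneOn ps (Ioi 0) := by
  have hd : ∀ y ∈ Ioi (0:ℝ), DifferentiableAt ℝ (Real.log ∘ Real.Gamma) y := fun y hy =>
    (hasDerivAt_logGamma hy).differentiableAt
  have h := Real.convexOn_log_Gamma.monotoneOn_deriv hd
  intro a ha b hb hab
  have e : ∀ y ∈ Ioi (0:ℝ), deriv (Real.log ∘ Real.Gamma) y = ps y := fun y hy => by
    rw [Function.comp_def]; exact (hasDerivAt_logGamma hy).deriv
  rw [← e a ha, ← e b hb]; exact h ha hb hab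

/-- partial sums -/
def T (n : ℕ) (x : ℝ) : ℝ := ∑ k ∈ Finset.range n, 1 / ((k : ℝ) + x)

def sr (x : ℝ) : ℝ := ∑' n : ℕ, (1 / ((n : ℝ) + 1) - 1 / ((n : ℝ) + x))


lemma summable_sr {x : ℝ} (hx : 0 < x) :
    Summable (fun n : ℕ => 1 / ((n : ℝ) + 1) - 1 / ((n : ℝ) + x)) := by
  have hs : Summable (fun n : ℕ => 1 / ((n : ℝ)) ^ 2) := by
    simpa using Real.summable_one_div_nat_rpow.mpr (by norm_num : (1:ℝ) < 2)
  refine (hs.mul_left |x - 1|).of_norm_bounded_eventually_nat ?_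
  filter_upwards [eventually_ge_atTop 1] with n hn
  have hn0 : (0:ℝ) < n := by exact_mod_cast hn
  have h1 : (0:ℝ) < (n:ℝ) + 1 := by linarith
  have h2 : (0:ℝ) < (n:ℝ) + x := by linarith
  have key : 1 / ((n : ℝ) + 1) - 1 / ((n : ℝ) + x) = (x - 1) / (((n:ℝ)+1) * ((n:ℝ)+x)) := by
    field_simp
    ring
  have hb : (n:ℝ)^2 ≤ ((n:ℝ)+1) * ((n:ℝ)+x) := by nlinarith
  rw [key, Real.norm_eq_abs, abs_div, abs_of_pos (mul_pos h1 h2),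
    show |x-1| * (1/(n:ℝ)^2) = |x-1| / (n:ℝ)^2 by ring,
    div_le_div_iff₀ (mul_pos h1 h2) (by positivity)]
  exact mul_le_mul_of_nonneg_left hb (abs_nonneg _)

lemma summable_tri (c : ℝ) (hc : 0 < c) : Summable (fun n : ℕ => 1 / ((n : ℝ) + c) ^ 2) := by
  have hs : Summable (fun n : ℕ => 1 / ((n : ℝ)) ^ 2) := by
    simpa using Real.summable_one_div_nat_rpow.mpr (by norm_num : (1:ℝ) < 2)
  refine hs.of_norm_bounded_eventually_nat ?_
  filter_upwards [eventually_ge_atTop 1] with n hn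
  have hn0 : (0:ℝ) < n := by exact_mod_cast hn
  have h2 : (0:ℝ) < (n:ℝ) + c := by linarith
  rw [Real.norm_eq_abs, abs_of_pos (by positivity)]
  gcongr
  nlinarith

lemma T_succ (n : ℕ) (x : ℝ) : T (n+1) x = T n x + 1 / ((n:ℝ) + x) := by
  rw [T, T, Finset.sum_range_succ]

lemma ps_rec_nat {x : ℝ} (hx : 0 < x) (n : ℕ) : ps (x + n) = ps x + T n x := by
  induction n with
  | zero => simp [T]
  | succ n ih =>
      have hxn : (0:ℝ) < x + n := by positivity
      have h0 : ps (x + (n+1 : ℕ)) = ps ((x + n) + 1) := by push_cast; ring_nf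
      rw [h0, ps_rec hxn, ih, T_succ]
      have : 1 / (x + (n:ℝ)) = 1 / ((n:ℝ) + x) := by rw [add_comm]
      rw [this]; ring

lemma ps_nat (m : ℕ) : ps ((m : ℝ) + 1) = -γ + T m 1 := by
  have := ps_rec_nat one_pos m
  rw [ps_one] at this
  rw [add_comm (m:ℝ) 1]
  exact this

lemma tendsto_T_sub (x : ℝ) (hx : 0 < x) :
    Tendsto (fun m : ℕ => T m 1 - T m x) atTop (𝓝 (sr x)) := by
  have h := (summable_sr hx).hasSum.tendsto_sum_nat
  refine h.congr fun m => ?_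
  rw [T, T, ← Finset.sum_sub_distrib]

lemma ps_eq {x : ℝ} (hx : 0 < x) : ps x = -γ + sr x := by
  set c : ℕ := Nat.ceil x with hc
  have hc1 : 1 ≤ c := Nat.one_le_ceil_iff.mpr hx
  have hcx : x ≤ c := Nat.le_ceil x
  set P : ℕ → ℝ := fun m => T (m+1) 1 - T (m+1) x with hP
  have key : ∀ m : ℕ, T m 1 - T (m+1) x ≤ ps x + γ ∧
      ps x + γ ≤ T (m + c) 1 - T (m+1) x := by
    intro m
    have h1 : ps ((m:ℝ) + 1) ≤ ps (x + (m+1 : ℕ)) := by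
      refine ps_mono (mem_Ioi.mpr (by positivity)) (mem_Ioi.mpr (by positivity)) ?_
      push_cast; linarith
    have h2 : ps (x + (m+1 : ℕ)) ≤ ps (((m + c : ℕ) : ℝ) + 1) := by
      refine ps_mono (mem_Ioi.mpr (by positivity)) (mem_Ioi.mpr (by positivity)) ?_
      push_cast; linarith
    rw [ps_rec_nat hx (m+1)] at h1 h2
    rw [ps_nat m] at h1
    rw [ps_nat (m + c)] at h2
    constructor <;> linarith
  have Tmc : ∀ m : ℕ, T (m + c) 1 ≤ T (m+1) 1 + c * (1 / ((m:ℝ) + 1)) := by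
    intro m
    have e : T (m + c) 1 = T m 1 + ∑ i ∈ Finset.range c, 1 / (((m + i : ℕ) : ℝ) + 1) := by
      rw [T, T, Finset.sum_range_add]
    have hb : ∑ i ∈ Finset.range c, 1 / (((m + i : ℕ) : ℝ) + 1) ≤
        ∑ _i ∈ Finset.range c, 1 / ((m : ℝ) + 1) := by
      refine Finset.sum_le_sum fun i _ => ?_
      refine one_div_le_one_div_of_le (by positivity) ?_
      push_cast; linarith [Nat.cast_nonneg (α := ℝ) i]
    simp only [Finset.sum_const, Finset.card_range, nsmul_eq_mul] at hb
    have hT1 : T m 1 ≤ T (m+1) 1 := by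
      rw [T_succ]
      have : (0:ℝ) ≤ 1 / ((m:ℝ) + 1) := by positivity
      linarith
    rw [e]; linarith
  have hub : ∀ m : ℕ, ps x + γ ≤ P m + c * (1 / ((m:ℝ) + 1)) := fun m => by
    have := (key m).2
    have h2 := Tmc m
    simp only [hP]; linarith
  have hlb : ∀ m : ℕ, P m - 1 / ((m:ℝ) + 1) ≤ ps x + γ := fun m => by
    have h1 := (key m).1
    have hTT := T_succ m 1
    simp only [hP]; rw [hTT]; linarith
  have htend : Tendsto P atTop (𝓝 (sr x)) :=
    (tendsto_T_sub x hx).comp (tendsto_add_atTop_nat 1)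
  have hz1 : Tendsto (fun m : ℕ => 1 / ((m:ℝ) + 1)) atTop (𝓝 0) :=
    tendsto_one_div_add_atTop_nhds_zero_nat
  have hz2 : Tendsto (fun m : ℕ => (c:ℝ) * (1 / ((m:ℝ) + 1))) atTop (𝓝 0) := by
    simpa using hz1.const_mul (c:ℝ)
  have hA : ps x + γ ≤ sr x := by
    have := ge_of_tendsto (htend.add hz2) (Eventually.of_forall hub)
    simpa using this
  have hB : sr x ≤ ps x + γ := by
    have := le_of_tendsto (htend.sub hz1) (Eventually.of_forall hlb)
    simpa using this
  linarith

lemma hasDerivAt_sr {x : ℝ} (hx : 0 < x) :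
    HasDerivAt sr (∑' n : ℕ, 1 / ((n:ℝ) + x) ^ 2) x := by
  have hc : 0 < x/2 := by linarith
  have key := hasDerivAt_tsum_of_isPreconnected
    (u := fun n : ℕ => 1/((n:ℝ)+x/2)^2)
    (g := fun (n:ℕ) (y:ℝ) => 1/((n:ℝ)+1) - 1/((n:ℝ)+y))
    (g' := fun (n:ℕ) (y:ℝ) => 1/((n:ℝ)+y)^2)
    (t := Ioi (x/2)) (y₀ := x) (y := x)
    (summable_tri _ hc) isOpen_Ioi (isPreconnected_Ioi)
    (fun n y hy => ?_) (fun n y hy => ?_) (by simp [mem_Ioi]; linarith)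
    (summable_sr hx) (by simp [mem_Ioi]; linarith)
  · exact key
  · -- HasDerivAt (fun y => 1/(n+1) - 1/(n+y)) (1/(n+y)^2) y
    have hny : (0:ℝ) < (n:ℝ) + y := by
      have : x/2 < y := hy
      have : (0:ℝ) ≤ (n:ℝ) := Nat.cast_nonneg n
      linarith
    have h1 : HasDerivAt (fun y : ℝ => (n:ℝ) + y) 1 y := by
      simpa using (hasDerivAt_id y).const_add ((n:ℝ))
    have h2 : HasDerivAt (fun y : ℝ => ((n:ℝ) + y)⁻¹) (-(((n:ℝ)+y)^2)⁻¹) y := by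
      have := h1.inv hny.ne'
      simpa [div_eq_mul_inv, Pi.inv_def] using this
    have h3 : HasDerivAt (fun y : ℝ => 1/((n:ℝ)+1) - 1/((n:ℝ)+y)) (((n:ℝ)+y)^2)⁻¹ y := by
      simp only [one_div]
      simpa using h2.const_sub (((n:ℝ)+1)⁻¹)
    simpa [one_div] using h3
  · -- bound
    have hy2 : x/2 < y := hy
    have hn0 : (0:ℝ) ≤ (n:ℝ) := Nat.cast_nonneg n
    have hny : (0:ℝ) < (n:ℝ) + y := by linarith
    have hnc : (0:ℝ) < (n:ℝ) + x/2 := by linarith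
    rw [Real.norm_eq_abs, abs_of_pos (by positivity)]
    have h2 : ((n:ℝ) + x/2)^2 ≤ ((n:ℝ) + y)^2 := by nlinarith
    exact one_div_le_one_div_of_le (by positivity) h2

/-- trigamma identity -/
lemma key_identity {x : ℝ} (hx : 0 < x) :
    R 2 x / Real.Gamma x - (R 1 x / Real.Gamma x) ^ 2 = ∑' n : ℕ, 1 / ((n:ℝ) + x) ^ 2 := by
  have hG : Real.Gamma x ≠ 0 := (Real.Gamma_pos_of_pos hx).ne'
  have h1 : HasDerivAt ps (R 2 x / Real.Gamma x - (R 1 x / Real.Gamma x) ^ 2) x := by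
    have hdiv := (hasDerivAt_R 1 hx).div (hasDerivAt_Gamma_R hx) hG
    have e : (R 1 / Real.Gamma) = ps := rfl
    rw [e] at hdiv
    refine hdiv.congr_deriv ?_
    field_simp
  have h2 : HasDerivAt ps (∑' n : ℕ, 1 / ((n:ℝ) + x) ^ 2) x := by
    have hsr := (hasDerivAt_sr hx).const_add (-γ)
    refine hsr.congr_of_eventuallyEq ?_
    filter_upwards [Ioi_mem_nhds hx] with y hy
    exact ps_eq hy
  exact h1.unique h2

/-- evaluation of the trigamma sum at a positive integer -/
lemma tri_sum_eval (K : ℕ) (hK : 1 ≤ K) :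
    ∑' n : ℕ, 1 / ((n:ℝ) + K) ^ 2
      = Real.pi ^ 2 / 6 - ∑ j ∈ Finset.Icc 1 (K - 1), (1 : ℝ) / (j : ℝ) ^ 2 := by
  have hsum := hasSum_zeta_two
  have hS : Summable (fun n : ℕ => 1 / ((n:ℝ)) ^ 2) := hsum.summable
  have hsplit := (Summable.sum_add_tsum_nat_add (f := fun n : ℕ => 1 / ((n:ℝ))^2) K hS)
  have e1 : ∑' n : ℕ, 1 / (((n + K : ℕ)):ℝ) ^ 2 = ∑' n : ℕ, 1 / ((n:ℝ) + K) ^ 2 := by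
    refine tsum_congr fun n => by push_cast; ring_nf
  rw [e1] at hsplit
  have e2 : ∑ i ∈ Finset.range K, 1 / ((i:ℝ)) ^ 2
      = ∑ j ∈ Finset.Icc 1 (K - 1), (1 : ℝ) / (j : ℝ) ^ 2 := by
    have h0 : Finset.range K = Finset.Ico 0 K := by rw [Finset.range_eq_Ico]
    rw [h0, Finset.sum_eq_sum_Ico_succ_bot (by omega : 0 < K)]
    have : Finset.Ico 1 K = Finset.Icc 1 (K - 1) := by
      rw [← Finset.Ico_add_one_right_eq_Icc]
      congr 1
      omega
    rw [this]
    norm_num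
  rw [hsum.tsum_eq] at hsplit
  rw [e2] at hsplit
  linarith

lemma integral_gamma_log_pow (K : ℕ) (hK : 1 ≤ K) (m : ℕ) (hm : m ≠ 0) :
    ∫ x, Real.log x ^ m ∂(gammaMeasure K K)
      = (∫ t in Ioi (0:ℝ),
          t ^ ((K:ℝ) - 1) * ((Real.log t - Real.log K) ^ m * Real.exp (-t))) / Real.Gamma K := by
  have hK0 : (0:ℝ) < K := by exact_mod_cast hK
  have hpdf_nonneg : ∀ x, 0 ≤ gammaPDFReal K K x := gammaPDFReal_nonneg hK0 hK0
  -- withDensity to weighted integral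
  have h1 : ∫ x, Real.log x ^ m ∂(gammaMeasure K K)
      = ∫ x, gammaPDFReal K K x * Real.log x ^ m := by
    rw [gammaMeasure]
    rw [show gammaPDF (K:ℝ) K = fun x => ((Real.toNNReal (gammaPDFReal K K x) : ℝ≥0) : ℝ≥0∞)
      from rfl]
    rw [integral_withDensity_eq_integral_smul (measurable_gammaPDFReal K K).real_toNNReal]
    refine integral_congr_ae (Eventually.of_forall fun x => ?_)
    show (gammaPDFReal (K:ℝ) K x).toNNReal • Real.log x ^ m = _
    rw [NNReal.smul_def, Real.coe_toNNReal _ (hpdf_nonneg x), smul_eq_mul]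
  -- restrict to Ioi 0
  have h2 : ∫ x, gammaPDFReal K K x * Real.log x ^ m
      = ∫ x in Ioi (0:ℝ), gammaPDFReal K K x * Real.log x ^ m := by
    refine (setIntegral_eq_integral_of_forall_compl_eq_zero fun x hx => ?_).symm
    rcases lt_or_eq_of_le (not_lt.mp (fun h => hx h) : x ≤ 0) with h | h
    · rw [gammaPDFReal, if_neg (not_le.mpr h), zero_mul]
    · subst h
      rw [Real.log_zero, zero_pow hm, mul_zero]
  -- substitution
  set g : ℝ → ℝ := fun t => gammaPDFReal K K (t / K) * (Real.log t - Real.log K) ^ m with hg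
  have h3 : ∫ x in Ioi (0:ℝ), gammaPDFReal K K x * Real.log x ^ m
      = ∫ x in Ioi (0:ℝ), g ((K:ℝ) * x) := by
    refine setIntegral_congr_fun measurableSet_Ioi fun x hx => ?_
    have hx0 : (0:ℝ) < x := hx
    rw [hg]
    simp only []
    rw [mul_comm (K:ℝ) x, mul_div_assoc, div_self hK0.ne', mul_one,
      Real.log_mul hx0.ne' hK0.ne']
    ring_nf
  have h4 : ∫ x in Ioi (0:ℝ), g ((K:ℝ) * x) = (K:ℝ)⁻¹ • ∫ t in Ioi ((K:ℝ) * 0), g t :=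
    integral_comp_mul_left_Ioi g 0 hK0
  -- evaluate g on Ioi 0
  have h5 : ∫ t in Ioi ((K:ℝ) * 0), g t
      = ((K:ℝ) / Real.Gamma K) * ∫ t in Ioi (0:ℝ),
          t ^ ((K:ℝ) - 1) * ((Real.log t - Real.log K) ^ m * Real.exp (-t)) := by
    rw [mul_zero, ← integral_const_mul]
    refine setIntegral_congr_fun measurableSet_Ioi fun t ht => ?_
    have ht0 : (0:ℝ) < t := ht
    have htK : 0 ≤ t / K := by positivity
    rw [hg]
    simp only []
    rw [gammaPDFReal, if_pos htK, Real.div_rpow ht0.le hK0.le,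
      show -((K:ℝ) * (t / K)) = -t by field_simp]
    have hKpow : (K:ℝ) ^ ((K:ℝ) - 1) * (K:ℝ) = (K:ℝ) ^ ((K:ℝ)) := by
      rw [← Real.rpow_add_one hK0.ne' ((K:ℝ) - 1)]
      norm_num
    rw [← hKpow]
    have hne1 : (K:ℝ) ^ ((K:ℝ)-1) ≠ 0 := (Real.rpow_pos_of_pos hK0 _).ne'
    have hne2 : Real.Gamma (K:ℝ) ≠ 0 := (Real.Gamma_pos_of_pos hK0).ne'
    field_simp
  rw [h1, h2, h3, h4, h5, smul_eq_mul]
  have hne2 : Real.Gamma (K:ℝ) ≠ 0 := (Real.Gamma_pos_of_pos hK0).ne'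
  field_simp

lemma E1 (K : ℕ) (hK : 1 ≤ K) :
    ∫ x, Real.log x ∂(gammaMeasure K K) = R 1 K / Real.Gamma K - Real.log K := by
  have hK0 : (0:ℝ) < K := by exact_mod_cast hK
  have hG : Real.Gamma (K:ℝ) ≠ 0 := (Real.Gamma_pos_of_pos hK0).ne'
  have h := integral_gamma_log_pow K hK 1 one_ne_zero
  have h0 : (fun x => Real.log x ^ 1) = fun x => Real.log x := by funext x; rw [pow_one]
  rw [h0] at h
  rw [h]
  have hsplit : ∫ t in Ioi (0:ℝ), t ^ ((K:ℝ) - 1) * ((Real.log t - Real.log K) ^ 1 * Real.exp (-t))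
      = R 1 K - Real.log K * R 0 K := by
    rw [R, R, ← integral_const_mul, ← integral_sub (integrableOn_R 1 hK0)
      ((integrableOn_R 0 hK0).const_mul (Real.log K))]
    refine setIntegral_congr_fun measurableSet_Ioi fun t ht => ?_
    ring
  rw [hsplit, R_zero hK0]
  field_simp

lemma E2 (K : ℕ) (hK : 1 ≤ K) :
    ∫ x, (Real.log x) ^ 2 ∂(gammaMeasure K K)
      = (R 2 K - 2 * Real.log K * R 1 K + Real.log K ^ 2 * R 0 K) / Real.Gamma K := by
  have hK0 : (0:ℝ) < K := by exact_mod_cast hK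
  have h := integral_gamma_log_pow K hK 2 two_ne_zero
  rw [h]
  congr 1
  rw [R, R, R, ← integral_const_mul (2 * Real.log K), ← integral_const_mul (Real.log K ^ 2),
    sub_add,
    ← integral_sub ((integrableOn_R 1 hK0).const_mul _) ((integrableOn_R 0 hK0).const_mul _)]
  refine Eq.trans ?_ (integral_sub (integrableOn_R 2 hK0)
    (((integrableOn_R 1 hK0).const_mul _).sub ((integrableOn_R 0 hK0).const_mul _)))
  refine setIntegral_congr_fun measurableSet_Ioi fun t ht => ?_
  ring

theorem variance_log_gamma' {Ω : Type*} [MeasurableSpace Ω] (μ : Measure Ω)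
    [IsProbabilityMeasure μ] (K : ℕ) (hK : 1 ≤ K) (S : Ω → ℝ) (hS : Measurable S)
    (hlaw : μ.map S = ProbabilityTheory.gammaMeasure K K) :
    (∫ ω, (Real.log (S ω)) ^ 2 ∂μ) - (∫ ω, Real.log (S ω) ∂μ) ^ 2
      = Real.pi ^ 2 / 6 - ∑ j ∈ Finset.Icc 1 (K - 1), (1 : ℝ) / (j : ℝ) ^ 2 := by
  have hK0 : (0:ℝ) < K := by exact_mod_cast hK
  have hG : Real.Gamma (K:ℝ) ≠ 0 := (Real.Gamma_pos_of_pos hK0).ne'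
  have hmap1 : ∫ ω, Real.log (S ω) ∂μ = ∫ x, Real.log x ∂(μ.map S) :=
    (integral_map hS.aemeasurable Real.measurable_log.aestronglyMeasurable).symm
  have hmap2 : ∫ ω, (Real.log (S ω)) ^ 2 ∂μ = ∫ x, (Real.log x) ^ 2 ∂(μ.map S) :=
    (integral_map hS.aemeasurable
      ((Real.measurable_log.pow_const 2).aestronglyMeasurable)).symm
  rw [hmap1, hmap2, hlaw, E1 K hK, E2 K hK, R_zero hK0]
  calc (R 2 K - 2 * Real.log K * R 1 K + Real.log K ^ 2 * Real.Gamma K) / Real.Gamma K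
        - (R 1 K / Real.Gamma K - Real.log K) ^ 2
      = R 2 (K:ℝ) / Real.Gamma K - (R 1 (K:ℝ) / Real.Gamma K) ^ 2 := by field_simp; ring
    _ = ∑' n : ℕ, 1 / ((n:ℝ) + (K:ℝ)) ^ 2 := key_identity hK0
    _ = Real.pi ^ 2 / 6 - ∑ j ∈ Finset.Icc 1 (K - 1), (1 : ℝ) / (j : ℝ) ^ 2 := tri_sum_eval K hK

end VLG
end

open MeasureTheory ProbabilityTheory

/-- If `S` is a real random variable with law `Gamma(K, K)` (`K` a positive integer), then the
variance of `log S` equals the trigamma value `ψ′(K) = π²/6 - ∑_{j=1}^{K-1} 1/j²`, i.e.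
`E[(log S)²] - (E[log S])² = π²/6 - ∑_{j=1}^{K-1} 1/j²`. -/
theorem variance_log_gamma {Ω : Type*} [MeasurableSpace Ω] (μ : Measure Ω)
    [IsProbabilityMeasure μ] (K : ℕ) (hK : 1 ≤ K) (S : Ω → ℝ) (hS : Measurable S)
    (hlaw : μ.map S = gammaMeasure K K) :
    (∫ ω, (Real.log (S ω)) ^ 2 ∂μ) - (∫ ω, Real.log (S ω) ∂μ) ^ 2
      = Real.pi ^ 2 / 6 - ∑ j ∈ Finset.Icc 1 (K - 1), (1 : ℝ) / (j : ℝ) ^ 2 :=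
  VLG.variance_log_gamma' μ K hK S hS hlaw
end

section
/- Let P₁ and P₂ be p×p positive definite Hermitian complex matrices and let L be an invertible p×p complex matrix. Then L P₁ Lᴴ and L P₂ Lᴴ are positive definite Hermitian, and the Riemannian distance is invariant under this congruence action: ‖log((L P₁ Lᴴ)^{−1/2} (L P₂ Lᴴ) (L P₁ Lᴴ)^{−1/2})‖_Fr = ‖log(P₁^{−1/2} P₂ P₁^{−1/2})‖_Fr. -/
open Matrix
open scoped ComplexOrder

/-- The matrix logarithm of a positive definite Hermitian matrix, via the continuous functional
calculus of the real logarithm. -/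
noncomputable def matLog {p : ℕ} (A : Matrix (Fin p) (Fin p) ℂ) : Matrix (Fin p) (Fin p) ℂ :=
  cfc Real.log A

/-- The inverse square root `P^{-1/2}` of a positive definite Hermitian matrix, via the
continuous functional calculus of `x ↦ (√x)⁻¹`. -/
noncomputable def invSqrt {p : ℕ} (A : Matrix (Fin p) (Fin p) ℂ) : Matrix (Fin p) (Fin p) ℂ :=
  cfc (fun x : ℝ => (Real.sqrt x)⁻¹) A

/-- The Frobenius norm of a complex matrix. -/
noncomputable def frobNorm {p : ℕ} (A : Matrix (Fin p) (Fin p) ℂ) : ℝ :=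
  Real.sqrt (∑ i, ∑ j, ‖A i j‖ ^ 2)

section Aux

variable {p : ℕ}

/-- Congruence by an invertible matrix preserves positive definiteness. -/
lemma posDef_conj {P L : Matrix (Fin p) (Fin p) ℂ} (hP : P.PosDef) (hL : IsUnit L) :
    (L * P * Lᴴ).PosDef := by
  refine Matrix.PosDef.of_dotProduct_mulVec_pos ?_ (fun x hx => ?_)
  · have := hP.isHermitian
    simp [Matrix.IsHermitian, Matrix.conjTranspose_mul, this.eq, mul_assoc]
  · have hLH : IsUnit Lᴴ := by rw [← Matrix.star_eq_conjTranspose]; exact hL.star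
    have hinj : Function.Injective (Lᴴ.mulVec) := mulVec_injective_iff_isUnit.2 hLH
    have hy : Lᴴ *ᵥ x ≠ 0 := fun h => hx (hinj (by simpa using h))
    have := hP.dotProduct_mulVec_pos hy
    calc 0 < star (Lᴴ *ᵥ x) ⬝ᵥ P *ᵥ (Lᴴ *ᵥ x) := this
      _ = star x ⬝ᵥ (L * P * Lᴴ) *ᵥ x := by
          rw [star_mulVec, conjTranspose_conjTranspose, ← dotProduct_mulVec,
            ← Matrix.mulVec_mulVec, ← Matrix.mulVec_mulVec]

lemma posdef_spectrum {A : Matrix (Fin p) (Fin p) ℂ} (hA : A.PosDef) :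
    ∀ x ∈ spectrum ℝ A, 0 < x := by
  intro x hx
  rw [Matrix.IsHermitian.spectrum_real_eq_range_eigenvalues hA.isHermitian] at hx
  obtain ⟨i, rfl⟩ := hx
  exact hA.eigenvalues_pos i

/-- The square root of a positive definite matrix via the continuous functional calculus. -/
noncomputable def matSqrt (A : Matrix (Fin p) (Fin p) ℂ) : Matrix (Fin p) (Fin p) ℂ :=
  cfc Real.sqrt A

lemma contOn_invSqrt {A : Matrix (Fin p) (Fin p) ℂ} (hA : A.PosDef) :
    ContinuousOn (fun x : ℝ => (Real.sqrt x)⁻¹) (spectrum ℝ A) :=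
  ContinuousOn.inv₀ Real.continuous_sqrt.continuousOn
    (fun x hx => ne_of_gt (Real.sqrt_pos.2 (posdef_spectrum hA x hx)))

lemma selfAdj_of_posDef {A : Matrix (Fin p) (Fin p) ℂ} (hA : A.PosDef) : IsSelfAdjoint A :=
  hA.isHermitian

lemma sqrt_selfAdj {A : Matrix (Fin p) (Fin p) ℂ} : IsSelfAdjoint (matSqrt A) :=
  cfc_predicate _ _

lemma invSqrt_selfAdj {A : Matrix (Fin p) (Fin p) ℂ} : IsSelfAdjoint (invSqrt A) :=
  cfc_predicate _ _

lemma sqrt_mul_sqrt {A : Matrix (Fin p) (Fin p) ℂ} (hA : A.PosDef) :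
    matSqrt A * matSqrt A = A := by
  rw [matSqrt, ← cfc_mul _ _ A Real.continuous_sqrt.continuousOn
      Real.continuous_sqrt.continuousOn]
  rw [cfc_congr (g := fun x => x) (fun x hx => Real.mul_self_sqrt (posdef_spectrum hA x hx).le)]
  exact cfc_id' ℝ A (selfAdj_of_posDef hA)

lemma sqrt_mul_invSqrt {A : Matrix (Fin p) (Fin p) ℂ} (hA : A.PosDef) :
    matSqrt A * invSqrt A = 1 := by
  rw [matSqrt, invSqrt, ← cfc_mul _ _ A Real.continuous_sqrt.continuousOn (contOn_invSqrt hA)]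
  rw [cfc_congr (g := fun _ => (1:ℝ)) (fun x hx => by
    field_simp [ne_of_gt (Real.sqrt_pos.2 (posdef_spectrum hA x hx))])]
  exact cfc_one (R := ℝ) A (selfAdj_of_posDef hA)

lemma invSqrt_mul_sqrt {A : Matrix (Fin p) (Fin p) ℂ} (hA : A.PosDef) :
    invSqrt A * matSqrt A = 1 := by
  rw [matSqrt, invSqrt, ← cfc_mul _ _ A (contOn_invSqrt hA) Real.continuous_sqrt.continuousOn]
  rw [cfc_congr (g := fun _ => (1:ℝ)) (fun x hx => by
    field_simp [ne_of_gt (Real.sqrt_pos.2 (posdef_spectrum hA x hx))])]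
  exact cfc_one (R := ℝ) A (selfAdj_of_posDef hA)

lemma invSqrt_mul_self_mul_invSqrt {A : Matrix (Fin p) (Fin p) ℂ} (hA : A.PosDef) :
    invSqrt A * A * invSqrt A = 1 := by
  calc invSqrt A * A * invSqrt A
      = invSqrt A * (matSqrt A * matSqrt A) * invSqrt A := by rw [sqrt_mul_sqrt hA]
    _ = (invSqrt A * matSqrt A) * (matSqrt A * invSqrt A) := by noncomm_ring
    _ = 1 := by rw [invSqrt_mul_sqrt hA, sqrt_mul_invSqrt hA, one_mul]

/-- Conjugation by a unitary matrix as a star algebra homomorphism. -/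
noncomputable def conjHom (U : Matrix (Fin p) (Fin p) ℂ) (hU : Uᴴ * U = 1) :
    Matrix (Fin p) (Fin p) ℂ →⋆ₐ[ℂ] Matrix (Fin p) (Fin p) ℂ where
  toFun x := U * x * Uᴴ
  map_one' := by
    show U * 1 * Uᴴ = 1
    rw [mul_one]
    exact mul_eq_one_comm.1 hU
  map_mul' x y := by
    show U * (x * y) * Uᴴ = (U * x * Uᴴ) * (U * y * Uᴴ)
    calc U * (x * y) * Uᴴ = U * x * (Uᴴ * U) * y * Uᴴ := by rw [hU]; noncomm_ring
      _ = U * x * Uᴴ * (U * y * Uᴴ) := by noncomm_ring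
  map_zero' := by simp
  map_add' x y := by noncomm_ring
  commutes' c := by
    simp [Algebra.algebraMap_eq_smul_one, Matrix.mul_smul, Matrix.smul_mul,
      mul_eq_one_comm.1 hU]
  map_star' x := by
    simp [Matrix.star_eq_conjTranspose, Matrix.conjTranspose_mul, mul_assoc]

lemma conjHom_continuous (U : Matrix (Fin p) (Fin p) ℂ) (hU : Uᴴ * U = 1) :
    Continuous (conjHom U hU) := by
  show Continuous fun x : Matrix (Fin p) (Fin p) ℂ => U * x * Uᴴ
  fun_prop

lemma selfAdj_conj {U B : Matrix (Fin p) (Fin p) ℂ} (hB : IsSelfAdjoint B) :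
    IsSelfAdjoint (U * B * Uᴴ) := by
  have : Bᴴ = B := hB
  simp [_root_.IsSelfAdjoint, Matrix.star_eq_conjTranspose, Matrix.conjTranspose_mul, this,
    mul_assoc]

lemma cfc_conj (U B : Matrix (Fin p) (Fin p) ℂ) (hU : Uᴴ * U = 1)
    (f : ℝ → ℝ) (hf : ContinuousOn f (spectrum ℝ B)) (hB : IsSelfAdjoint B) :
    U * cfc f B * Uᴴ = cfc f (U * B * Uᴴ) := by
  have := StarAlgHom.map_cfc (conjHom U hU) f B hf (conjHom_continuous U hU) hB
    (selfAdj_conj hB)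
  exact this

lemma frobNorm_eq_trace (A : Matrix (Fin p) (Fin p) ℂ) :
    frobNorm A = Real.sqrt ((Matrix.trace (Aᴴ * A)).re) := by
  unfold frobNorm
  congr 1
  rw [Matrix.trace]
  rw [Complex.re_sum]
  rw [Finset.sum_comm]
  congr 1
  ext i
  simp only [Matrix.diag, Matrix.mul_apply, Matrix.conjTranspose_apply, Complex.re_sum]
  congr 1
  ext j
  rw [Complex.star_def, ← Complex.normSq_eq_conj_mul_self, Complex.normSq_eq_norm_sq]
  simp [← Complex.ofReal_pow]

lemma frobNorm_conj (U M : Matrix (Fin p) (Fin p) ℂ) (hU : Uᴴ * U = 1) :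
    frobNorm (U * M * Uᴴ) = frobNorm M := by
  rw [frobNorm_eq_trace, frobNorm_eq_trace M]
  congr 2
  have : (U * M * Uᴴ)ᴴ * (U * M * Uᴴ) = U * (Mᴴ * M) * Uᴴ := by
    simp only [Matrix.conjTranspose_mul, Matrix.conjTranspose_conjTranspose]
    calc U * (Mᴴ * Uᴴ) * (U * M * Uᴴ) = U * Mᴴ * (Uᴴ * U) * M * Uᴴ := by noncomm_ring
      _ = U * (Mᴴ * M) * Uᴴ := by rw [hU]; noncomm_ring
  rw [this, Matrix.trace_mul_cycle, ← mul_assoc, hU, one_mul]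

end Aux

/-- Let `P₁`, `P₂` be `p × p` positive definite Hermitian complex matrices and `L` an invertible
`p × p` complex matrix. Then `L P₁ Lᴴ` and `L P₂ Lᴴ` are positive definite Hermitian, and the
Riemannian distance is invariant under this congruence action:
`‖log((L P₁ Lᴴ)^{-1/2} (L P₂ Lᴴ) (L P₁ Lᴴ)^{-1/2})‖_Fr = ‖log(P₁^{-1/2} P₂ P₁^{-1/2})‖_Fr`. -/
theorem riemannian_distance_congruence_invariant (p : ℕ)
    (P₁ P₂ L : Matrix (Fin p) (Fin p) ℂ) (h₁ : P₁.PosDef) (h₂ : P₂.PosDef) (hL : IsUnit L) :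
    (L * P₁ * Lᴴ).PosDef ∧ (L * P₂ * Lᴴ).PosDef ∧
    frobNorm (matLog
        (invSqrt (L * P₁ * Lᴴ) * (L * P₂ * Lᴴ) * invSqrt (L * P₁ * Lᴴ)))
      = frobNorm (matLog (invSqrt P₁ * P₂ * invSqrt P₁)) := by
  have hQ₁ : (L * P₁ * Lᴴ).PosDef := posDef_conj h₁ hL
  have hQ₂ : (L * P₂ * Lᴴ).PosDef := posDef_conj h₂ hL
  refine ⟨hQ₁, hQ₂, ?_⟩
  set Q₁ : Matrix (Fin p) (Fin p) ℂ := L * P₁ * Lᴴ with hQ₁def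
  set U : Matrix (Fin p) (Fin p) ℂ := invSqrt Q₁ * L * matSqrt P₁ with hUdef
  -- `U` is unitary
  have hUH : Uᴴ = matSqrt P₁ * Lᴴ * invSqrt Q₁ := by
    have h1 : (matSqrt P₁)ᴴ = matSqrt P₁ := sqrt_selfAdj
    have h2 : (invSqrt Q₁)ᴴ = invSqrt Q₁ := invSqrt_selfAdj
    simp [hUdef, Matrix.conjTranspose_mul, h1, h2, mul_assoc]
  have hUUH : U * Uᴴ = 1 := by
    rw [hUH, hUdef]
    calc invSqrt Q₁ * L * matSqrt P₁ * (matSqrt P₁ * Lᴴ * invSqrt Q₁)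
        = invSqrt Q₁ * (L * (matSqrt P₁ * matSqrt P₁) * Lᴴ) * invSqrt Q₁ := by noncomm_ring
      _ = invSqrt Q₁ * Q₁ * invSqrt Q₁ := by rw [sqrt_mul_sqrt h₁]
      _ = 1 := invSqrt_mul_self_mul_invSqrt hQ₁
  have hU : Uᴴ * U = 1 := mul_eq_one_comm.1 hUUH
  -- the inner matrix `B`
  set B : Matrix (Fin p) (Fin p) ℂ := invSqrt P₁ * P₂ * invSqrt P₁ with hBdef
  have hS : (invSqrt P₁)ᴴ = invSqrt P₁ := invSqrt_selfAdj
  have hSunit : IsUnit (invSqrt P₁) :=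
    ⟨⟨invSqrt P₁, matSqrt P₁, invSqrt_mul_sqrt h₁, sqrt_mul_invSqrt h₁⟩, rfl⟩
  have hBposdef : B.PosDef := by
    have := posDef_conj h₂ hSunit
    rwa [hS] at this
  have hBsa : IsSelfAdjoint B := selfAdj_of_posDef hBposdef
  -- the conjugation identity
  have hkey : U * B * Uᴴ = invSqrt Q₁ * (L * P₂ * Lᴴ) * invSqrt Q₁ := by
    rw [hUH, hUdef, hBdef]
    calc invSqrt Q₁ * L * matSqrt P₁ * (invSqrt P₁ * P₂ * invSqrt P₁)
          * (matSqrt P₁ * Lᴴ * invSqrt Q₁)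
        = invSqrt Q₁ * (L * ((matSqrt P₁ * invSqrt P₁) * P₂ * (invSqrt P₁ * matSqrt P₁)) * Lᴴ)
          * invSqrt Q₁ := by noncomm_ring
      _ = invSqrt Q₁ * (L * P₂ * Lᴴ) * invSqrt Q₁ := by
          rw [sqrt_mul_invSqrt h₁, invSqrt_mul_sqrt h₁, one_mul, mul_one]
  -- continuity of `log` on the spectrum of `B`
  have hlog : ContinuousOn Real.log (spectrum ℝ B) :=
    Real.continuousOn_log.mono fun x hx => ne_of_gt (posdef_spectrum hBposdef x hx)
  calc frobNorm (matLog (invSqrt Q₁ * (L * P₂ * Lᴴ) * invSqrt Q₁))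
      = frobNorm (matLog (U * B * Uᴴ)) := by rw [hkey]
    _ = frobNorm (U * matLog B * Uᴴ) := by
        rw [matLog, matLog, cfc_conj U B hU Real.log hlog hBsa]
    _ = frobNorm (matLog B) := frobNorm_conj U (matLog B) hU
end
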